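/- arXiv:1810.00506 — 10 statements merged into one kernel-verified Lean document; each statement's English description precedes it below -/
import Mathlib

section
/- Let H be a finite set of hypotheses on a finite nonempty example set X, let P be a probability distribution on X with P(x) > 0 for all x, let MAJ_H be a majority function for H, and let ĥ ∈ H be a best majority hypothesis (a maximizer over h ∈ H of P({x : h(x) = MAJ_H(x)})). Then for every hypothesis h* ∈ H with h* ≠ ĥ, letting A = {x ∈ X : ĥ(x) ≠ h*(x)}, we have P({x ∈ A : h*(x) ≠ MAJ_H(x)}) ≥ (1/2)·P(A). -/
open Finset

/-- **Lemma 1 (Majority algorithm).** If `hhat` is a best majority hypothesis, then for any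
`hstar ∈ H` with `hstar ≠ hhat`, the probability (under `P`) that a counter-example
`x ∈ A = {x : hhat x ≠ hstar x}` satisfies `hstar x ≠ MAJ_H x` is at least half of `P A`. -/
theorem majority_lemma1
    {X : Type*} [Fintype X] [Nonempty X] [DecidableEq X]
    (H : Finset (X → ℕ))
    (P : X → ℝ)
    (hPpos : ∀ x, 0 < P x)
    (hPsum : ∑ x, P x = 1)
    (M : X → ℕ)
    (hM : ∀ (x : X) (v : ℕ),
      (H.filter (fun h => h x = v)).card ≤ (H.filter (fun h => h x = M x)).card)
    (hhat : X → ℕ) (hhatH : hhat ∈ H)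
    (hbest : ∀ h ∈ H,
      ∑ x ∈ univ.filter (fun x => h x = M x), P x
        ≤ ∑ x ∈ univ.filter (fun x => hhat x = M x), P x)
    (hstar : X → ℕ) (hstarH : hstar ∈ H) (hne : hstar ≠ hhat) :
    (1 / 2) * ∑ x ∈ univ.filter (fun x => hhat x ≠ hstar x), P x
      ≤ ∑ x ∈ univ.filter (fun x => hhat x ≠ hstar x ∧ hstar x ≠ M x), P x := by
  classical
  -- split the agreement sets along `hhat x = hstar x`
  have e1 : ∑ x ∈ univ.filter (fun x => hstar x = M x), P x
      = (∑ x ∈ univ.filter (fun x => hstar x = M x ∧ hhat x = hstar x), P x)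
      + ∑ x ∈ univ.filter (fun x => hstar x = M x ∧ ¬ hhat x = hstar x), P x := by
    rw [← Finset.filter_filter, ← Finset.filter_filter,
      Finset.sum_filter_add_sum_filter_not]
  have e2 : ∑ x ∈ univ.filter (fun x => hhat x = M x), P x
      = (∑ x ∈ univ.filter (fun x => hhat x = M x ∧ hhat x = hstar x), P x)
      + ∑ x ∈ univ.filter (fun x => hhat x = M x ∧ ¬ hhat x = hstar x), P x := by
    rw [← Finset.filter_filter, ← Finset.filter_filter,
      Finset.sum_filter_add_sum_filter_not]
  have e3 : (univ.filter (fun x => hstar x = M x ∧ hhat x = hstar x))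
      = (univ.filter (fun x => hhat x = M x ∧ hhat x = hstar x)) := by
    apply Finset.filter_congr
    intro x _
    constructor
    · rintro ⟨h1, h2⟩; exact ⟨by omega, h2⟩
    · rintro ⟨h1, h2⟩; exact ⟨by omega, h2⟩
  -- {hhat = M, hhat ≠ hstar} ⊆ {hhat ≠ hstar, hstar ≠ M}
  have e4 : ∑ x ∈ univ.filter (fun x => hhat x = M x ∧ ¬ hhat x = hstar x), P x
      ≤ ∑ x ∈ univ.filter (fun x => hhat x ≠ hstar x ∧ hstar x ≠ M x), P x := by
    apply Finset.sum_le_sum_of_subset_of_nonneg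
    · intro x hx
      simp only [Finset.mem_filter, Finset.mem_univ, true_and] at hx ⊢
      exact ⟨hx.2, by omega⟩
    · intro x _ _; exact (hPpos x).le
  have hb := hbest hstar hstarH
  -- split A along `hstar x = M x`
  have e5 : ∑ x ∈ univ.filter (fun x => hhat x ≠ hstar x), P x
      = (∑ x ∈ univ.filter (fun x => hhat x ≠ hstar x ∧ hstar x = M x), P x)
      + ∑ x ∈ univ.filter (fun x => hhat x ≠ hstar x ∧ ¬ hstar x = M x), P x := by
    rw [← Finset.filter_filter, ← Finset.filter_filter,
      Finset.sum_filter_add_sum_filter_not]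
  have e6 : (univ.filter (fun x => hstar x = M x ∧ ¬ hhat x = hstar x))
      = (univ.filter (fun x => hhat x ≠ hstar x ∧ hstar x = M x)) := by
    apply Finset.filter_congr
    intro x _
    simp [and_comm, Ne]
  have e7 : (univ.filter (fun x => hhat x ≠ hstar x ∧ ¬ hstar x = M x))
      = (univ.filter (fun x => hhat x ≠ hstar x ∧ hstar x ≠ M x)) := by
    rfl
  rw [e3, e6] at e1
  rw [e7] at e5
  linarith
end

section
/- Let H be a finite set of hypotheses on a finite nonempty example set X, let P be a probability distribution on X with P(x) > 0 for all x, let MAJ_H be a majority function for H, and let ĥ ∈ H be a best majority hypothesis. Then for every h* ∈ H with h* ≠ ĥ, the expected number of hypotheses eliminated by a counter-example drawn from P conditioned on D(ĥ, h*) is at least |H|/4; that is, Σ_{x ∈ D(ĥ,h*)} (P(x)/P(D(ĥ,h*)))·|{h ∈ H : h(x) ≠ h*(x)}| ≥ |H|/4. -/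
open Finset

/-- **Lemma 2 (Majority algorithm).** For a best majority hypothesis `hhat` and any target
`hstar ∈ H` with `hstar ≠ hhat`, a counter-example drawn from `P` conditioned on
`D(hhat, hstar)` eliminates at least `|H|/4` hypotheses in expectation. -/
theorem majority_expected_elimination
    {X : Type*} [Fintype X] [Nonempty X] [DecidableEq X]
    (H : Finset (X → ℕ))
    (P : X → ℝ)
    (hPpos : ∀ x, 0 < P x)
    (hPsum : ∑ x, P x = 1)
    (M : X → ℕ)
    (hM : ∀ (x : X) (v : ℕ),
      (H.filter (fun h => h x = v)).card ≤ (H.filter (fun h => h x = M x)).card)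
    (hhat : X → ℕ) (hhatH : hhat ∈ H)
    (hbest : ∀ h ∈ H,
      ∑ x ∈ univ.filter (fun x => h x = M x), P x
        ≤ ∑ x ∈ univ.filter (fun x => hhat x = M x), P x)
    (hstar : X → ℕ) (hstarH : hstar ∈ H) (hne : hstar ≠ hhat) :
    (H.card : ℝ) / 4 ≤
      ∑ x ∈ univ.filter (fun x => hhat x ≠ hstar x),
        (P x / ∑ y ∈ univ.filter (fun y => hhat y ≠ hstar y), P y) *
          ((H.filter (fun h => h x ≠ hstar x)).card : ℝ) := by
  classical
  set D := univ.filter (fun x => hhat x ≠ hstar x) with hDdef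
  have hDne : D.Nonempty := by
    obtain ⟨x, hx⟩ := Function.ne_iff.mp hne
    refine ⟨x, ?_⟩
    simp only [hDdef, mem_filter, mem_univ, true_and]
    exact Ne.symm hx
  have hPD : 0 < ∑ y ∈ D, P y := Finset.sum_pos (fun x _ => hPpos x) hDne
  set PD := ∑ y ∈ D, P y with hPDdef
  -- pointwise bound on points where hstar disagrees with M
  have key : ∀ x : X, hstar x ≠ M x →
      (H.card : ℝ) ≤ 2 * (H.filter (fun h => h x ≠ hstar x)).card := by
    intro x hx
    have h1 := hM x (hstar x)
    have h2 : (H.filter (fun h => h x = M x)).card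
        ≤ (H.filter (fun h => h x ≠ hstar x)).card := by
      apply Finset.card_le_card
      intro h hh
      simp only [mem_filter] at hh ⊢
      refine ⟨hh.1, ?_⟩
      rw [hh.2]
      exact fun e => hx (Eq.symm e)
    have h3 : (H.filter (fun h => h x = hstar x)).card
        + (H.filter (fun h => ¬ h x = hstar x)).card = H.card :=
      Finset.card_filter_add_card_filter_not (fun h : X → ℕ => h x = hstar x)
    have : (H.filter (fun h => ¬ h x = hstar x)) = (H.filter (fun h => h x ≠ hstar x)) := rfl
    rw [this] at h3
    have h5 : ((H.filter (fun h => h x = hstar x)).card : ℝ)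
        ≤ ((H.filter (fun h => h x ≠ hstar x)).card : ℝ) := by
      exact_mod_cast h1.trans h2
    push_cast [← h3]
    linarith
  -- split of D
  set A := D.filter (fun x => hstar x = M x) with hAdef
  set C := D.filter (fun x => ¬ hstar x = M x) with hCdef
  have hPAC : (∑ x ∈ A, P x) + (∑ x ∈ C, P x) = PD :=
    Finset.sum_filter_add_sum_filter_not D (fun x => hstar x = M x) P
  -- P(A) ≤ P(C)
  have hAC : (∑ x ∈ A, P x) ≤ ∑ x ∈ C, P x := by
    have hb := hbest hstar hstarH
    have split : ∀ f : X → ℕ,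
        ∑ x ∈ univ.filter (fun x => f x = M x), P x
          = (∑ x ∈ D, if f x = M x then P x else 0)
            + ∑ x ∈ univ.filter (fun x => ¬ hhat x ≠ hstar x),
                (if f x = M x then P x else 0) := by
      intro f
      conv_lhs => rw [Finset.sum_filter]
      exact (Finset.sum_filter_add_sum_filter_not univ (fun x => hhat x ≠ hstar x)
        (fun x => if f x = M x then P x else 0)).symm
    have eqout : ∀ x ∈ univ.filter (fun x => ¬ hhat x ≠ hstar x),
        (if hstar x = M x then P x else 0) = (if hhat x = M x then P x else 0) := by
      intro x hx
      simp only [mem_filter, not_not] at hx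
      rw [hx.2]
    rw [split hstar, split hhat, Finset.sum_congr rfl eqout] at hb
    have hb2 : (∑ x ∈ D, if hstar x = M x then P x else 0)
        ≤ ∑ x ∈ D, if hhat x = M x then P x else 0 := by linarith
    rw [← Finset.sum_filter, ← Finset.sum_filter] at hb2
    refine hb2.trans (Finset.sum_le_sum_of_subset_of_nonneg ?_ (fun x _ _ => (hPpos x).le))
    intro x hx
    simp only [hCdef, hDdef, mem_filter, mem_univ, true_and] at hx ⊢
    exact ⟨hx.1, fun e => hx.1 (hx.2.trans e.symm)⟩
  have hC2 : PD / 2 ≤ ∑ x ∈ C, P x := by linarith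
  -- now the main chain
  have step1 : ∑ x ∈ C, (P x / PD) * ((H.card : ℝ) / 2)
      ≤ ∑ x ∈ D, (P x / PD) * ((H.filter (fun h => h x ≠ hstar x)).card : ℝ) := by
    refine le_trans (Finset.sum_le_sum ?_) (Finset.sum_le_sum_of_subset_of_nonneg
      (Finset.filter_subset _ _)
      (fun x _ _ => mul_nonneg (div_nonneg (hPpos x).le hPD.le) (Nat.cast_nonneg _)))
    intro x hx
    simp only [hCdef, mem_filter] at hx
    have := key x hx.2
    have hp : 0 ≤ P x / PD := div_nonneg (hPpos x).le hPD.le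
    nlinarith [mul_le_mul_of_nonneg_left this hp]
  have step0 : (H.card : ℝ) / 4 ≤ ∑ x ∈ C, (P x / PD) * ((H.card : ℝ) / 2) := by
    have hsum : ∑ x ∈ C, (P x / PD) * ((H.card : ℝ) / 2)
        = ((∑ x ∈ C, P x) / PD) * ((H.card : ℝ) / 2) := by
      rw [← Finset.sum_mul, ← Finset.sum_div]
    rw [hsum]
    have h4 : (1:ℝ)/2 ≤ (∑ x ∈ C, P x) / PD := by
      rw [le_div_iff₀ hPD]; linarith
    calc (H.card : ℝ) / 4 = (1/2) * ((H.card : ℝ) / 2) := by ring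
      _ ≤ ((∑ x ∈ C, P x) / PD) * ((H.card : ℝ) / 2) :=
          mul_le_mul_of_nonneg_right h4 (by positivity)
  exact step0.trans step1
end

section
/- Let T : ℕ → ℝ satisfy T(1) = 0, and suppose that for every n ≥ 1 there exist nonnegative reals p₁, …, pₙ with Σ_{r=1}^{n} p_r = 1 and Σ_{r=1}^{n} r·p_r ≤ (3/4)·(n+1) such that T(n+1) ≤ 1 + Σ_{r=1}^{n} p_r·T(r). Then for every n ≥ 1, T(n) ≤ log(n)/log(4/3), i.e., T(n) ≤ log_{4/3}(n). -/
open Finset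

/-- The recursion underlying the learning-time bound of the Majority algorithm:
if `T 1 = 0` and for every `n ≥ 1` there is a probability vector `p` on `{1,…,n}` whose mean
is at most `(3/4)·(n+1)` with `T (n+1) ≤ 1 + ∑ r, p r · T r`, then
`T n ≤ log n / log (4/3)` for all `n ≥ 1`. -/
theorem majority_recursion_bound
    (T : ℕ → ℝ)
    (hT1 : T 1 = 0)
    (hrec : ∀ n : ℕ, 1 ≤ n → ∃ p : ℕ → ℝ,
      (∀ r ∈ Finset.Icc 1 n, 0 ≤ p r) ∧
      (∑ r ∈ Finset.Icc 1 n, p r = 1) ∧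
      (∑ r ∈ Finset.Icc 1 n, (r : ℝ) * p r ≤ (3 / 4) * (n + 1)) ∧
      T (n + 1) ≤ 1 + ∑ r ∈ Finset.Icc 1 n, p r * T r) :
    ∀ n : ℕ, 1 ≤ n → T n ≤ Real.log n / Real.log (4 / 3) := by
  have hL : 0 < Real.log (4 / 3) := Real.log_pos (by norm_num)
  intro n
  induction n using Nat.strong_induction_on with
  | _ n ih =>
    intro hn
    match n, hn with
    | 1, _ => simp [hT1]
    | (m + 2), _ =>
      have hm : 1 ≤ m + 1 := Nat.le_add_left 1 m
      obtain ⟨p, hp0, hp1, hpmean, hTrec⟩ := hrec (m + 1) hm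
      -- Jensen: ∑ p r * log r ≤ log (∑ p r * r)
      have hjensen : ∑ r ∈ Finset.Icc 1 (m + 1), p r * Real.log r ≤
          Real.log (∑ r ∈ Finset.Icc 1 (m + 1), (r : ℝ) * p r) := by
        have := (strictConcaveOn_log_Ioi.concaveOn).le_map_sum
          (t := Finset.Icc 1 (m + 1)) (w := p) (p := fun r : ℕ => (r : ℝ))
          hp0 hp1 (fun r hr => by
            have : 1 ≤ r := (Finset.mem_Icc.mp hr).1
            have : (0:ℝ) < r := by exact_mod_cast Nat.lt_of_lt_of_le Nat.zero_lt_one this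
            exact Set.mem_Ioi.mpr this)
        simpa [smul_eq_mul, mul_comm] using this
      -- the mean is positive and bounded
      have hmeanpos : (0 : ℝ) < ∑ r ∈ Finset.Icc 1 (m + 1), (r : ℝ) * p r := by
        have h1 : (1 : ℝ) = ∑ r ∈ Finset.Icc 1 (m + 1), p r := hp1.symm
        have hle : ∑ r ∈ Finset.Icc 1 (m + 1), p r ≤
            ∑ r ∈ Finset.Icc 1 (m + 1), (r : ℝ) * p r := by
          apply Finset.sum_le_sum
          intro r hr
          have h1r : (1 : ℝ) ≤ r := by exact_mod_cast (Finset.mem_Icc.mp hr).1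
          nlinarith [hp0 r hr]
        linarith
      have hlogle : Real.log (∑ r ∈ Finset.Icc 1 (m + 1), (r : ℝ) * p r) ≤
          Real.log ((3 / 4) * (m + 2)) := by
        apply Real.log_le_log hmeanpos
        have : ((m : ℝ) + 1 + 1) = (m + 2 : ℝ) := by ring
        calc ∑ r ∈ Finset.Icc 1 (m + 1), (r : ℝ) * p r ≤ (3/4) * ((m + 1 : ℕ) + 1) := hpmean
          _ = (3/4) * (m + 2 : ℝ) := by push_cast; ring
      have hlogsplit : Real.log ((3 / 4 : ℝ) * (m + 2)) =
          Real.log ((m : ℝ) + 2) - Real.log (4 / 3) := by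
        rw [Real.log_mul (by norm_num) (by positivity)]
        rw [show (3 / 4 : ℝ) = (4 / 3)⁻¹ by norm_num, Real.log_inv]
        ring
      -- apply induction hypothesis to each term
      have hsum : ∑ r ∈ Finset.Icc 1 (m + 1), p r * T r ≤
          ∑ r ∈ Finset.Icc 1 (m + 1), p r * (Real.log r / Real.log (4 / 3)) := by
        apply Finset.sum_le_sum
        intro r hr
        obtain ⟨h1r, h2r⟩ := Finset.mem_Icc.mp hr
        exact mul_le_mul_of_nonneg_left (ih r (Nat.lt_succ_of_le h2r) h1r) (hp0 r hr)
      have hsum2 : ∑ r ∈ Finset.Icc 1 (m + 1), p r * (Real.log r / Real.log (4 / 3)) =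
          (∑ r ∈ Finset.Icc 1 (m + 1), p r * Real.log r) / Real.log (4 / 3) := by
        rw [Finset.sum_div]
        apply Finset.sum_congr rfl
        intro r _; ring
      have key : T (m + 2) ≤ 1 + (Real.log ((m : ℝ) + 2) - Real.log (4 / 3)) / Real.log (4 / 3) := by
        have h1 : T (m + 2) ≤ 1 + (∑ r ∈ Finset.Icc 1 (m + 1), p r * Real.log r) / Real.log (4 / 3) := by
          calc T (m + 2) = T ((m + 1) + 1) := by ring_nf
            _ ≤ 1 + ∑ r ∈ Finset.Icc 1 (m + 1), p r * T r := hTrec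
            _ ≤ 1 + ∑ r ∈ Finset.Icc 1 (m + 1), p r * (Real.log r / Real.log (4 / 3)) := by linarith
            _ = 1 + (∑ r ∈ Finset.Icc 1 (m + 1), p r * Real.log r) / Real.log (4 / 3) := by rw [hsum2]
        have h2 : (∑ r ∈ Finset.Icc 1 (m + 1), p r * Real.log r) / Real.log (4 / 3) ≤
            (Real.log ((m : ℝ) + 2) - Real.log (4 / 3)) / Real.log (4 / 3) := by
          gcongr
          calc ∑ r ∈ Finset.Icc 1 (m + 1), p r * Real.log r
              ≤ Real.log (∑ r ∈ Finset.Icc 1 (m + 1), (r : ℝ) * p r) := hjensen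
            _ ≤ Real.log ((3 / 4) * (m + 2)) := hlogle
            _ = Real.log ((m : ℝ) + 2) - Real.log (4 / 3) := hlogsplit
        linarith
      have hfin : 1 + (Real.log ((m : ℝ) + 2) - Real.log (4 / 3)) / Real.log (4 / 3) =
          Real.log ((m : ℝ) + 2) / Real.log (4 / 3) := by
        field_simp
        ring
      have : Real.log ((m + 2 : ℕ) : ℝ) = Real.log ((m : ℝ) + 2) := by push_cast; ring_nf
      rw [this]
      linarith
end

section
/- Let H be a finite nonempty set of hypotheses on a finite nonempty example set X and let P be a probability distribution on X with P(x) > 0 for all x. For distinct hypotheses h₁, h₂ ∈ H define E(h₁,h₂) = Σ_{x ∈ D(h₁,h₂)} (|{h' ∈ H : h'(x) ≠ h₂(x)}|/|H|)·(P(x)/P(D(h₁,h₂))). Then for all h₁, h₂ ∈ H with h₁ ≠ h₂, E(h₁,h₂) + E(h₂,h₁) ≥ 1. -/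
open Finset

/-- **Lemma 4 (Randomized algorithm).** For distinct `h₁, h₂ ∈ H`, the expected eliminated
fractions satisfy `E(h₁,h₂) + E(h₂,h₁) ≥ 1`, where
`E(h₁,h₂) = ∑_{x ∈ D(h₁,h₂)} (|{h' ∈ H : h' x ≠ h₂ x}|/|H|) · (P x / P (D(h₁,h₂)))`. -/
theorem expected_elimination_sum_ge_one
    {X : Type*} [Fintype X] [Nonempty X] [DecidableEq X]
    (H : Finset (X → ℕ)) (hH : H.Nonempty)
    (P : X → ℝ)
    (hPpos : ∀ x, 0 < P x)
    (hPsum : ∑ x, P x = 1)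
    (h₁ h₂ : X → ℕ) (h₁H : h₁ ∈ H) (h₂H : h₂ ∈ H) (hne : h₁ ≠ h₂) :
    1 ≤ (∑ x ∈ univ.filter (fun x => h₁ x ≠ h₂ x),
          (((H.filter (fun h' => h' x ≠ h₂ x)).card : ℝ) / (H.card : ℝ)) *
            (P x / ∑ y ∈ univ.filter (fun y => h₁ y ≠ h₂ y), P y))
        + (∑ x ∈ univ.filter (fun x => h₂ x ≠ h₁ x),
          (((H.filter (fun h' => h' x ≠ h₁ x)).card : ℝ) / (H.card : ℝ)) *
            (P x / ∑ y ∈ univ.filter (fun y => h₂ y ≠ h₁ y), P y)) := by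
  classical
  have hDeq : univ.filter (fun x : X => h₂ x ≠ h₁ x)
      = univ.filter (fun x : X => h₁ x ≠ h₂ x) := by
    apply filter_congr; intro x _; simp [ne_comm]
  set D := univ.filter (fun x : X => h₁ x ≠ h₂ x) with hD
  have hDne : D.Nonempty := by
    obtain ⟨x, hx⟩ := Function.ne_iff.mp hne
    exact ⟨x, by simp [hD, hx]⟩
  have hPD : 0 < ∑ y ∈ D, P y :=
    Finset.sum_pos (fun y _ => hPpos y) hDne
  have hHcard : (0:ℝ) < (H.card : ℝ) := by
    exact_mod_cast Finset.card_pos.mpr hH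
  rw [hDeq]
  rw [← Finset.sum_add_distrib]
  have key : ∀ x ∈ D, P x / ∑ y ∈ D, P y ≤
      (((H.filter (fun h' => h' x ≠ h₂ x)).card : ℝ) / (H.card : ℝ)) *
        (P x / ∑ y ∈ D, P y)
      + (((H.filter (fun h' => h' x ≠ h₁ x)).card : ℝ) / (H.card : ℝ)) *
        (P x / ∑ y ∈ D, P y) := by
    intro x hx
    have hx' : h₁ x ≠ h₂ x := by simpa [hD] using hx
    have hcard : H.card ≤ (H.filter (fun h' => h' x ≠ h₂ x)).card
        + (H.filter (fun h' => h' x ≠ h₁ x)).card := by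
      calc H.card ≤ (H.filter (fun h' => h' x ≠ h₂ x) ∪
            H.filter (fun h' => h' x ≠ h₁ x)).card := by
              apply Finset.card_le_card
              intro h' hh'
              by_cases hc : h' x = h₂ x
              · exact Finset.mem_union_right _ (Finset.mem_filter.mpr ⟨hh', by
                  rw [hc]; exact fun e => hx' e.symm⟩)
              · exact Finset.mem_union_left _ (Finset.mem_filter.mpr ⟨hh', hc⟩)
        _ ≤ _ := Finset.card_union_le _ _
    have hfrac : (1:ℝ) ≤ ((H.filter (fun h' => h' x ≠ h₂ x)).card : ℝ) / (H.card : ℝ)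
        + ((H.filter (fun h' => h' x ≠ h₁ x)).card : ℝ) / (H.card : ℝ) := by
      rw [← add_div, le_div_iff₀ hHcard, one_mul]
      exact_mod_cast hcard
    have hpx : 0 ≤ P x / ∑ y ∈ D, P y :=
      div_nonneg (hPpos x).le hPD.le
    calc P x / ∑ y ∈ D, P y = 1 * (P x / ∑ y ∈ D, P y) := (one_mul _).symm
      _ ≤ _ := by rw [← add_mul]; exact mul_le_mul_of_nonneg_right hfrac hpx
  calc (1:ℝ) = ∑ x ∈ D, P x / ∑ y ∈ D, P y := by
        rw [← Finset.sum_div, div_self hPD.ne']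
    _ ≤ _ := Finset.sum_le_sum key
end

section
/- Let H be a finite nonempty set of hypotheses on a finite nonempty example set X, let P be a probability distribution on X with P(x) > 0 for all x, and let q : H → ℝ be nonnegative with Σ_{h ∈ H} q(h) = 1. Define E'(h₁,h₂) = 1 if h₁ = h₂, and E'(h₁,h₂) = Σ_{x ∈ D(h₁,h₂)} (|{h' ∈ H : h'(x) ≠ h₂(x)}|/|H|)·(P(x)/P(D(h₁,h₂))) otherwise. Then Σ_{h₁ ∈ H} Σ_{h₂ ∈ H} q(h₁)·q(h₂)·E'(h₁,h₂) ≥ 1/2; that is, when both the learner's hypothesis and the target are drawn from q, the expected fraction of hypotheses eliminated in one round is at least one half. -/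
open Finset

noncomputable def Eprime {X : Type*} [Fintype X] [DecidableEq X]
    (H : Finset (X → ℕ)) (P : X → ℝ) (h₁ h₂ : X → ℕ) : ℝ :=
  if h₁ = h₂ then (1 : ℝ)
  else ∑ x ∈ univ.filter (fun x => h₁ x ≠ h₂ x),
      (((H.filter (fun h' => h' x ≠ h₂ x)).card : ℝ) / (H.card : ℝ)) *
        (P x / ∑ y ∈ univ.filter (fun y => h₁ y ≠ h₂ y), P y)

lemma Eprime_add_ge {X : Type*} [Fintype X] [DecidableEq X]
    (H : Finset (X → ℕ)) (hH : H.Nonempty) (P : X → ℝ) (hPpos : ∀ x, 0 < P x)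
    (h₁ h₂ : X → ℕ) : (1 : ℝ) ≤ Eprime H P h₁ h₂ + Eprime H P h₂ h₁ := by
  have hHpos : (0 : ℝ) < (H.card : ℝ) := by exact_mod_cast Finset.card_pos.mpr hH
  by_cases h : h₁ = h₂
  · simp [Eprime, h]
  · have h' : h₂ ≠ h₁ := fun e => h e.symm
    rw [Eprime, Eprime, if_neg h, if_neg h']
    have hD : univ.filter (fun x => h₂ x ≠ h₁ x) = univ.filter (fun x => h₁ x ≠ h₂ x) := by
      apply filter_congr; intro x _; simp [ne_comm]
    rw [hD]
    set D := univ.filter (fun x => h₁ x ≠ h₂ x) with hDdef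
    set PD := ∑ y ∈ D, P y with hPDdef
    have hDne : D.Nonempty := by
      have : ∃ x, h₁ x ≠ h₂ x := by
        by_contra hc; push_neg at hc; exact h (funext hc)
      obtain ⟨x, hx⟩ := this
      exact ⟨x, by simp [hDdef, hx]⟩
    have hPDpos : 0 < PD := Finset.sum_pos (fun y _ => hPpos y) hDne
    rw [← Finset.sum_add_distrib]
    have hsum1 : (1 : ℝ) = ∑ x ∈ D, P x / PD := by
      rw [← Finset.sum_div, div_self (ne_of_gt hPDpos)]
    rw [hsum1]
    apply Finset.sum_le_sum
    intro x hxD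
    have hx : h₁ x ≠ h₂ x := by
      simp only [hDdef, mem_filter, mem_univ, true_and] at hxD; exact hxD
    have hun : H.filter (fun h' => h' x ≠ h₂ x) ∪ H.filter (fun h' => h' x ≠ h₁ x) = H := by
      rw [← Finset.filter_or]
      apply Finset.filter_true_of_mem
      intro h' _
      by_contra hc
      push_neg at hc
      exact hx (hc.2 ▸ hc.1 ▸ rfl)
    have hcard : (H.card : ℝ) ≤
        ((H.filter (fun h' => h' x ≠ h₂ x)).card : ℝ) +
        ((H.filter (fun h' => h' x ≠ h₁ x)).card : ℝ) := by
      have := Finset.card_union_le (H.filter (fun h' => h' x ≠ h₂ x))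
        (H.filter (fun h' => h' x ≠ h₁ x))
      rw [hun] at this
      exact_mod_cast this
    have ht : 0 ≤ P x / PD := div_nonneg (le_of_lt (hPpos x)) (le_of_lt hPDpos)
    have hfac : (1 : ℝ) ≤ (((H.filter (fun h' => h' x ≠ h₂ x)).card : ℝ) +
        ((H.filter (fun h' => h' x ≠ h₁ x)).card : ℝ)) / (H.card : ℝ) :=
      (one_le_div hHpos).mpr hcard
    calc P x / PD = 1 * (P x / PD) := by ring
      _ ≤ ((((H.filter (fun h' => h' x ≠ h₂ x)).card : ℝ) +
            ((H.filter (fun h' => h' x ≠ h₁ x)).card : ℝ)) / (H.card : ℝ)) * (P x / PD) :=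
          mul_le_mul_of_nonneg_right hfac ht
      _ = (((H.filter (fun h' => h' x ≠ h₂ x)).card : ℝ) / (H.card : ℝ)) * (P x / PD) +
          (((H.filter (fun h' => h' x ≠ h₁ x)).card : ℝ) / (H.card : ℝ)) * (P x / PD) := by
          ring

/-- **Lemma 5 (Randomized algorithm).** When both the learner's hypothesis and the target
are drawn from the same distribution `q` on `H`, the expected fraction of hypotheses
eliminated in one round is at least `1/2`. Here `E'(h₁,h₂) = 1` if `h₁ = h₂`, and otherwise
`E'(h₁,h₂) = ∑_{x ∈ D(h₁,h₂)} (|{h' ∈ H : h' x ≠ h₂ x}|/|H|) · (P x / P (D(h₁,h₂)))`. -/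
theorem randomized_expected_elimination_half
    {X : Type*} [Fintype X] [Nonempty X] [DecidableEq X]
    (H : Finset (X → ℕ)) (hH : H.Nonempty)
    (P : X → ℝ)
    (hPpos : ∀ x, 0 < P x)
    (hPsum : ∑ x, P x = 1)
    (q : (X → ℕ) → ℝ)
    (hqnonneg : ∀ h ∈ H, 0 ≤ q h)
    (hqsum : ∑ h ∈ H, q h = 1) :
    (1 : ℝ) / 2 ≤
      ∑ h₁ ∈ H, ∑ h₂ ∈ H, q h₁ * q h₂ *
        (if h₁ = h₂ then (1 : ℝ)
         else ∑ x ∈ univ.filter (fun x => h₁ x ≠ h₂ x),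
            (((H.filter (fun h' => h' x ≠ h₂ x)).card : ℝ) / (H.card : ℝ)) *
              (P x / ∑ y ∈ univ.filter (fun y => h₁ y ≠ h₂ y), P y)) := by
  show (1 : ℝ) / 2 ≤ ∑ h₁ ∈ H, ∑ h₂ ∈ H, q h₁ * q h₂ * Eprime H P h₁ h₂
  set S := ∑ h₁ ∈ H, ∑ h₂ ∈ H, q h₁ * q h₂ * Eprime H P h₁ h₂ with hS
  have hswap : S = ∑ h₁ ∈ H, ∑ h₂ ∈ H, q h₁ * q h₂ * Eprime H P h₂ h₁ := by
    rw [hS, Finset.sum_comm]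
    apply Finset.sum_congr rfl; intro a _
    apply Finset.sum_congr rfl; intro b _
    ring
  have key : (1 : ℝ) ≤ S + S := by
    calc (1 : ℝ) = (∑ h ∈ H, q h) * (∑ h ∈ H, q h) := by rw [hqsum]; ring
      _ = ∑ h₁ ∈ H, ∑ h₂ ∈ H, q h₁ * q h₂ := Finset.sum_mul_sum _ _ _ _
      _ ≤ ∑ h₁ ∈ H, ∑ h₂ ∈ H, q h₁ * q h₂ * (Eprime H P h₁ h₂ + Eprime H P h₂ h₁) := by
          apply Finset.sum_le_sum; intro a ha
          apply Finset.sum_le_sum; intro b hb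
          exact le_mul_of_one_le_right (mul_nonneg (hqnonneg a ha) (hqnonneg b hb))
            (Eprime_add_ge H hH P hPpos a b)
      _ = S + S := by
          nth_rewrite 1 [hS]
          nth_rewrite 1 [hswap]
          rw [← Finset.sum_add_distrib]
          apply Finset.sum_congr rfl; intro a _
          rw [← Finset.sum_add_distrib]
          apply Finset.sum_congr rfl; intro b _
          ring
  linarith
end

section
/- Let ι be a finite nonempty index set, let e : ι → ι → ℝ satisfy e(i,i) = 1 for all i and e(i,j) + e(j,i) ≥ 1 for all i ≠ j, and let q : ι → ℝ be nonnegative with Σ_i q(i) = 1. Then Σ_i Σ_j q(i)·q(j)·e(i,j) ≥ 1/2. -/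
open Finset

/-- Quadratic-form inequality: if `e i i = 1`, `e i j + e j i ≥ 1` for `i ≠ j`, and `q` is a
probability vector, then `∑ i ∑ j, q i · q j · e i j ≥ 1/2`. -/
theorem quadratic_form_half
    {ι : Type*} [Fintype ι] [Nonempty ι]
    (e : ι → ι → ℝ)
    (hdiag : ∀ i, e i i = 1)
    (hsym : ∀ i j, i ≠ j → 1 ≤ e i j + e j i)
    (q : ι → ℝ)
    (hqnonneg : ∀ i, 0 ≤ q i)
    (hqsum : ∑ i, q i = 1) :
    (1 : ℝ) / 2 ≤ ∑ i, ∑ j, q i * q j * e i j := by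
  set S := ∑ i, ∑ j, q i * q j * e i j with hS
  have hswap : S = ∑ i, ∑ j, q i * q j * e j i := by
    rw [hS, Finset.sum_comm]
    exact Finset.sum_congr rfl fun i _ => Finset.sum_congr rfl fun j _ => by ring
  have h2 : 2 * S = ∑ i, ∑ j, q i * q j * (e i j + e j i) := by
    rw [two_mul]
    nth_rewrite 2 [hswap]
    rw [hS, ← Finset.sum_add_distrib]
    exact Finset.sum_congr rfl fun i _ => by
      rw [← Finset.sum_add_distrib]
      exact Finset.sum_congr rfl fun j _ => by ring
  have h1 : (1 : ℝ) = ∑ i, ∑ j, q i * q j := by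
    simp [← Finset.mul_sum, hqsum]
  have hle : ∑ i, ∑ j, q i * q j ≤ ∑ i, ∑ j, q i * q j * (e i j + e j i) := by
    refine Finset.sum_le_sum fun i _ => Finset.sum_le_sum fun j _ => ?_
    have hq : 0 ≤ q i * q j := mul_nonneg (hqnonneg i) (hqnonneg j)
    have h1e : 1 ≤ e i j + e j i := by
      rcases eq_or_ne i j with rfl | h
      · rw [hdiag]; norm_num
      · exact hsym i j h
    calc q i * q j = q i * q j * 1 := by ring
      _ ≤ q i * q j * (e i j + e j i) := by
          exact mul_le_mul_of_nonneg_left h1e hq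
  linarith
end

section
/- Let T : ℕ → ℝ satisfy T(1) = 0, and suppose that for every n ≥ 1 there exist nonnegative reals p₁, …, pₙ with Σ_{r=1}^{n} p_r = 1 and Σ_{r=1}^{n} r·p_r ≤ (n+1)/2 such that T(n+1) ≤ 1 + Σ_{r=1}^{n} p_r·T(r). Then for every n ≥ 1, T(n) ≤ log₂(n). -/
open Finset

/-- The recursion underlying the learning-time bound of the Randomized algorithm:
if `T 1 = 0` and for every `n ≥ 1` there is a probability vector `p` on `{1,…,n}` whose mean
is at most `(n+1)/2` with `T (n+1) ≤ 1 + ∑ r, p r · T r`, then `T n ≤ log₂ n` for `n ≥ 1`. -/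
theorem randomized_recursion_bound
    (T : ℕ → ℝ)
    (hT1 : T 1 = 0)
    (hrec : ∀ n : ℕ, 1 ≤ n → ∃ p : ℕ → ℝ,
      (∀ r ∈ Finset.Icc 1 n, 0 ≤ p r) ∧
      (∑ r ∈ Finset.Icc 1 n, p r = 1) ∧
      (∑ r ∈ Finset.Icc 1 n, (r : ℝ) * p r ≤ ((n : ℝ) + 1) / 2) ∧
      T (n + 1) ≤ 1 + ∑ r ∈ Finset.Icc 1 n, p r * T r) :
    ∀ n : ℕ, 1 ≤ n → T n ≤ Real.logb 2 n := by
  intro n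
  induction n using Nat.strong_induction_on with
  | _ n ih =>
    intro hn
    match n, hn with
    | 1, _ => simp [hT1]
    | (m+2), _ =>
      obtain ⟨p, hp0, hp1, hmean, hrec'⟩ := hrec (m+1) (Nat.le_add_left 1 m)
      set s := Finset.Icc 1 (m+1) with hs
      have hTr : ∀ r ∈ s, T r ≤ Real.logb 2 r := by
        intro r hr
        simp only [hs, Finset.mem_Icc] at hr
        exact ih r (by omega) hr.1
      have step1 : ∑ r ∈ s, p r * T r ≤ ∑ r ∈ s, p r * Real.logb 2 r :=
        Finset.sum_le_sum fun r hr => mul_le_mul_of_nonneg_left (hTr r hr) (hp0 r hr)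
      -- Jensen for log
      have hconc := strictConcaveOn_log_Ioi.concaveOn
      have jensen : ∑ r ∈ s, p r * Real.log r ≤ Real.log (∑ r ∈ s, p r * (r : ℝ)) := by
        have := hconc.le_map_sum (t := s) (w := p) (p := fun r : ℕ => (r : ℝ))
          hp0 hp1 (by
            intro r hr
            simp only [hs, Finset.mem_Icc] at hr
            have : (1 : ℝ) ≤ (r : ℝ) := by exact_mod_cast hr.1
            exact Set.mem_Ioi.mpr (by linarith))
        simpa [smul_eq_mul] using this
      have hsum_ge : (1 : ℝ) ≤ ∑ r ∈ s, p r * (r : ℝ) := by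
        calc (1 : ℝ) = ∑ r ∈ s, p r := hp1.symm
        _ ≤ ∑ r ∈ s, p r * (r : ℝ) := by
          refine Finset.sum_le_sum fun r hr => ?_
          simp only [hs, Finset.mem_Icc] at hr
          have h1 : (1 : ℝ) ≤ (r : ℝ) := by exact_mod_cast hr.1
          nlinarith [hp0 r (by simp [hs, Finset.mem_Icc]; omega)]
      have hsum_le : ∑ r ∈ s, p r * (r : ℝ) ≤ ((m : ℝ) + 2) / 2 := by
        have : ∑ r ∈ s, p r * (r : ℝ) = ∑ r ∈ s, (r : ℝ) * p r := by
          exact Finset.sum_congr rfl fun r _ => mul_comm _ _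
        rw [this]
        have := hmean
        push_cast at this ⊢
        linarith
      have hlog2 : (0 : ℝ) < Real.log 2 := Real.log_pos (by norm_num)
      have hlogle : Real.log (∑ r ∈ s, p r * (r : ℝ)) ≤ Real.log (((m : ℝ) + 2) / 2) :=
        Real.log_le_log (by linarith) hsum_le
      -- combine
      have key : ∑ r ∈ s, p r * Real.logb 2 r ≤ Real.logb 2 (((m : ℝ) + 2) / 2) := by
        unfold Real.logb
        simp only [← mul_div_assoc]
        rw [← Finset.sum_div]
        apply div_le_div_of_nonneg_right _ hlog2.le
        calc ∑ r ∈ s, p r * Real.log r ≤ Real.log (∑ r ∈ s, p r * (r : ℝ)) := jensen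
        _ ≤ _ := hlogle
      have hfin : Real.logb 2 (((m : ℝ) + 2) / 2) = Real.logb 2 ((m : ℝ) + 2) - 1 := by
        rw [Real.logb_div (by positivity) (by norm_num), Real.logb_self_eq_one] <;> norm_num
      calc T (m + 2) ≤ 1 + ∑ r ∈ s, p r * T r := hrec'
      _ ≤ 1 + ∑ r ∈ s, p r * Real.logb 2 r := by linarith
      _ ≤ 1 + Real.logb 2 (((m : ℝ) + 2) / 2) := by linarith
      _ = Real.logb 2 ((m : ℝ) + 2) := by rw [hfin]; ring
      _ = Real.logb 2 ((m + 2 : ℕ) : ℝ) := by push_cast; ring_nf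
end

section
/- Let X be a finite nonempty example set with probability distribution P (P(x) > 0 for all x), let ε, δ ∈ (0,1) and N ≥ 1 be reals, and let h and h* be hypotheses with P(D(h,h*)) ≥ ε (h is ε-bad). Let w : X → ℝ be a nonnegative weight function with Σ_{x ∈ D(h,h*)} w(x) ≤ ln(N/δ). Define the threshold θ*(x) = ln(N/δ)·2·P(x)/ε and call x light if w(x) ≤ θ*(x). Then the conditional probability of the light columns given D(h,h*) is at least one half: Σ_{x ∈ D(h,h*), w(x) ≤ θ*(x)} P(x)/P(D(h,h*)) ≥ 1/2. Consequently, the counter-example drawn from P conditioned on D(h,h*) lands on a light column, and hence increases the total weight of light columns, by at least 1/2 in expectation. -/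
open Finset

/-- **Lemma (light columns get at least half the counter-example mass).** If `h` is
`ε`-bad and the total weight of `w` on `D(h,h*)` is at most `ln (N/δ)`, then the columns of
`D(h,h*)` that are light (i.e. `w x ≤ θ*(x) = ln(N/δ)·2·P(x)/ε`) carry at least half of
the conditional probability mass of `D(h,h*)`. -/
theorem light_columns_half_mass
    {X : Type*} [Fintype X] [Nonempty X] [DecidableEq X]
    (P : X → ℝ)
    (hPpos : ∀ x, 0 < P x)
    (hPsum : ∑ x, P x = 1)
    (ε δ N : ℝ) (hε0 : 0 < ε) (hε1 : ε < 1) (hδ0 : 0 < δ) (hδ1 : δ < 1) (hN : 1 ≤ N)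
    (h hstar : X → ℕ)
    (hbad : ε ≤ ∑ x ∈ univ.filter (fun x => h x ≠ hstar x), P x)
    (w : X → ℝ) (hwnonneg : ∀ x, 0 ≤ w x)
    (hwsum : ∑ x ∈ univ.filter (fun x => h x ≠ hstar x), w x ≤ Real.log (N / δ)) :
    (1 : ℝ) / 2 ≤
      ∑ x ∈ univ.filter
          (fun x => h x ≠ hstar x ∧ w x ≤ Real.log (N / δ) * 2 * P x / ε),
        P x / ∑ y ∈ univ.filter (fun y => h y ≠ hstar y), P y := by
  set L := Real.log (N / δ) with hL
  have hL0 : 0 < L := Real.log_pos (by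
    rw [lt_div_iff₀ hδ0]; nlinarith)
  set D := univ.filter (fun x => h x ≠ hstar x) with hD
  set Light := univ.filter
      (fun x => h x ≠ hstar x ∧ w x ≤ L * 2 * P x / ε) with hLight
  have hPD : 0 < ∑ y ∈ D, P y := lt_of_lt_of_le hε0 hbad
  have hsub : Light ⊆ D := by
    intro x hx
    simp only [hLight, mem_filter, mem_univ, true_and] at hx
    simp only [hD, mem_filter, mem_univ, true_and]
    exact hx.1
  -- heavy mass bound
  have hheavy : ∑ x ∈ D \ Light, P x ≤ ε / 2 := by
    have hstep : ∀ x ∈ D \ Light, P x ≤ ε / (2 * L) * w x := by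
      intro x hx
      simp only [mem_sdiff, hD, hLight, mem_filter, mem_univ, true_and] at hx
      have hx2 : L * 2 * P x / ε < w x := by
        by_contra hc
        exact hx.2 ⟨hx.1, le_of_not_gt hc⟩
      rw [div_lt_iff₀ hε0] at hx2
      rw [div_mul_eq_mul_div, le_div_iff₀ (by positivity)]
      nlinarith
    calc ∑ x ∈ D \ Light, P x ≤ ∑ x ∈ D \ Light, ε / (2 * L) * w x :=
          Finset.sum_le_sum hstep
      _ = ε / (2 * L) * ∑ x ∈ D \ Light, w x := by rw [Finset.mul_sum]
      _ ≤ ε / (2 * L) * ∑ x ∈ D, w x := by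
          apply mul_le_mul_of_nonneg_left _ (by positivity)
          exact Finset.sum_le_sum_of_subset_of_nonneg (sdiff_subset)
            (fun x _ _ => hwnonneg x)
      _ ≤ ε / (2 * L) * L := by
          apply mul_le_mul_of_nonneg_left hwsum (by positivity)
      _ = ε / 2 := by field_simp
  have hlight : (∑ y ∈ D, P y) / 2 ≤ ∑ x ∈ Light, P x := by
    have hsplit : ∑ x ∈ Light, P x = ∑ x ∈ D, P x - ∑ x ∈ D \ Light, P x := by
      rw [eq_sub_iff_add_eq, Finset.sum_sdiff_eq_sub hsub]; ring
    rw [hsplit]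
    have : ε / 2 ≤ (∑ y ∈ D, P y) / 2 := by linarith
    linarith
  rw [← Finset.sum_div, le_div_iff₀ hPD]
  linarith
end

section
/- Let X be a finite nonempty example set with probability distribution P (P(x) > 0 for all x), let ε, δ ∈ (0,1) and N ≥ 1 be reals, let h* be a target hypothesis, and let h₁, …, h_i be hypotheses. Define cumulative weights by W₁(x) = 0 and W_{j+1}(x) = W_j(x) + P(x)/P(D(h_j,h*)) if x ∈ D(h_j,h*), W_{j+1}(x) = W_j(x) otherwise; and define the threshold θ*(x) = ln(N/δ)·2·P(x)/ε. Suppose that for every j with 1 ≤ j ≤ i: P(D(h_j,h*)) ≥ ε (each h_j is ε-bad) and Σ_{x ∈ D(h_j,h*)} W_j(x) ≤ ln(N/δ). If there exists a column x ∈ X with W_{i+1}(x) ≤ θ*(x) (a column still light after round i), then i ≤ (4·ln(N/δ) + 2)/ε. -/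
open Finset

/-- **Lemma (all columns become heavy quickly).** If every round `j ∈ {1,…,i}` uses an
`ε`-bad hypothesis `hⱼ` whose total weight is at most `ln (N/δ)`, and some column is still
light after round `i` (i.e. `W (i+1) x ≤ θ*(x) = ln(N/δ)·2·P(x)/ε`), then
`i ≤ (4·ln(N/δ) + 2)/ε`. -/
theorem light_column_round_bound
    {X : Type*} [Fintype X] [Nonempty X] [DecidableEq X]
    (P : X → ℝ)
    (hPpos : ∀ x, 0 < P x)
    (hPsum : ∑ x, P x = 1)
    (ε δ N : ℝ) (hε0 : 0 < ε) (hε1 : ε < 1) (hδ0 : 0 < δ) (hδ1 : δ < 1) (hN : 1 ≤ N)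
    (hstar : X → ℕ)
    (i : ℕ)
    (hseq : ℕ → (X → ℕ))
    (W : ℕ → X → ℝ)
    (hW1 : ∀ x, W 1 x = 0)
    (hWrec : ∀ j : ℕ, 1 ≤ j → ∀ x : X,
      W (j + 1) x = W j x +
        (if hseq j x ≠ hstar x
         then P x / ∑ y ∈ univ.filter (fun y => hseq j y ≠ hstar y), P y
         else 0))
    (hbad : ∀ j ∈ Finset.Icc 1 i,
      ε ≤ ∑ x ∈ univ.filter (fun x => hseq j x ≠ hstar x), P x)
    (hweight : ∀ j ∈ Finset.Icc 1 i,
      ∑ x ∈ univ.filter (fun x => hseq j x ≠ hstar x), W j x ≤ Real.log (N / δ))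
    (hlight : ∃ x : X, W (i + 1) x ≤ Real.log (N / δ) * 2 * P x / ε) :
    (i : ℝ) ≤ (4 * Real.log (N / δ) + 2) / ε := by
  classical
  set L := Real.log (N / δ) with hLdef
  have hL : 0 < L := Real.log_pos (by rw [lt_div_iff₀ hδ0]; linarith)
  -- nonnegativity of W
  have hWnn : ∀ j, 1 ≤ j → ∀ x, 0 ≤ W j x := by
    intro j hj
    induction j, hj using Nat.le_induction with
    | base => intro x; rw [hW1]
    | succ n hn ih =>
      intro x
      rw [hWrec n hn x]
      have h2 : 0 ≤ (if hseq n x ≠ hstar x then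
          P x / ∑ y ∈ univ.filter (fun y => hseq n y ≠ hstar y), P y else 0) := by
        split
        · exact div_nonneg (hPpos x).le (Finset.sum_nonneg fun y _ => (hPpos y).le)
        · exact le_refl 0
      linarith [ih x]
  set cap : X → ℝ := fun x => (2 * L + 1) * P x / ε with hcapdef
  have hcapnn : ∀ x, 0 ≤ cap x := by
    intro x
    have := (hPpos x).le
    positivity
  set Φ : ℕ → ℝ := fun j => ∑ x, min (W j x) (cap x) with hΦdef
  have hΦ1 : Φ 1 = 0 := by
    simp only [hΦdef, hW1]
    refine Finset.sum_eq_zero fun x _ => ?_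
    exact min_eq_left (hcapnn x)
  -- key growth step
  have key : ∀ j, 1 ≤ j → j ≤ i → Φ j + 1 / 2 ≤ Φ (j + 1) := by
    intro j hj1 hji
    have hjIcc : j ∈ Finset.Icc 1 i := Finset.mem_Icc.mpr ⟨hj1, hji⟩
    set D : Finset X := univ.filter (fun x => hseq j x ≠ hstar x) with hDdef
    set PD : ℝ := ∑ x ∈ D, P x with hPDdef
    have hPDε : ε ≤ PD := hbad j hjIcc
    have hPD0 : 0 < PD := lt_of_lt_of_le hε0 hPDε
    set Lset : Finset X := D.filter (fun x => W j x ≤ L * 2 * P x / ε) with hLsdef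
    have hLsubD : Lset ⊆ D := Finset.filter_subset _ _
    -- heavy mass bound
    have hheavy : ∑ x ∈ D \ Lset, P x ≤ ε / 2 := by
      have h1 : ∑ x ∈ D \ Lset, (L * 2 * P x / ε) ≤ ∑ x ∈ D \ Lset, W j x := by
        refine Finset.sum_le_sum fun x hx => ?_
        obtain ⟨hxD, hxnL⟩ := Finset.mem_sdiff.mp hx
        have hnot : ¬ (W j x ≤ L * 2 * P x / ε) := fun h =>
          hxnL (Finset.mem_filter.mpr ⟨hxD, h⟩)
        linarith [lt_of_not_ge hnot]
      have h2 : ∑ x ∈ D \ Lset, W j x ≤ ∑ x ∈ D, W j x :=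
        Finset.sum_le_sum_of_subset_of_nonneg (Finset.sdiff_subset)
          (fun x _ _ => hWnn j hj1 x)
      have h3 : ∑ x ∈ D, W j x ≤ L := hweight j hjIcc
      have h4 : ∑ x ∈ D \ Lset, (L * 2 * P x / ε) = (L * 2 / ε) * ∑ x ∈ D \ Lset, P x := by
        rw [Finset.mul_sum]
        exact Finset.sum_congr rfl fun x _ => by ring
      have h5 : (L * 2 / ε) * ∑ x ∈ D \ Lset, P x ≤ L := by linarith
      have hεne : ε ≠ 0 := ne_of_gt hε0
      have h6 : L * 2 * (∑ x ∈ D \ Lset, P x) ≤ L * ε := by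
        have := mul_le_mul_of_nonneg_right h5 hε0.le
        calc L * 2 * (∑ x ∈ D \ Lset, P x) = (L * 2 / ε) * (∑ x ∈ D \ Lset, P x) * ε := by
              field_simp
          _ ≤ L * ε := this
      nlinarith [h6, hL]
    have hsplit : ∑ x ∈ Lset, P x = PD - ∑ x ∈ D \ Lset, P x := by
      have := Finset.sum_sdiff (f := P) hLsubD
      rw [hPDdef]; linarith [this]
    have hlightmass : PD / 2 ≤ ∑ x ∈ Lset, P x := by
      rw [hsplit]; linarith
    -- per-column delta
    have hdelta : ∀ x : X,
        min (W j x) (cap x) + (if x ∈ Lset then P x / PD else 0)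
          ≤ min (W (j + 1) x) (cap x) := by
      intro x
      by_cases hxD : x ∈ D
      · have hmemD : hseq j x ≠ hstar x := (Finset.mem_filter.mp hxD).2
        have hWs : W (j + 1) x = W j x + P x / PD := by
          rw [hWrec j hj1 x, if_pos hmemD]
        by_cases hxL : x ∈ Lset
        · -- light column: exact increment
          have hlight' : W j x ≤ L * 2 * P x / ε := (Finset.mem_filter.mp hxL).2
          have hθcap : L * 2 * P x / ε + P x / ε ≤ cap x := by
            simp only [hcapdef]
            rw [← add_div, div_le_div_iff₀ hε0 hε0]
            nlinarith [(hPpos x).le, hε0.le]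
          have hinc : P x / PD ≤ P x / ε := by
            gcongr
            exact (hPpos x).le
          have hWjcap : W j x ≤ cap x := by
            have : (0:ℝ) ≤ P x / ε := div_nonneg (hPpos x).le hε0.le
            linarith
          have hW1cap : W (j + 1) x ≤ cap x := by
            rw [hWs]; linarith
          rw [if_pos hxL, min_eq_left hWjcap, min_eq_left hW1cap, hWs]
        · -- heavy column: min is monotone
          rw [if_neg hxL, add_zero]
          have : W j x ≤ W (j + 1) x := by
            rw [hWs]
            have : 0 ≤ P x / PD := div_nonneg (hPpos x).le hPD0.le
            linarith
          exact min_le_min this le_rfl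
      · have hxL : x ∉ Lset := fun h => hxD (hLsubD h)
        have hmem : ¬ hseq j x ≠ hstar x := by
          intro h
          exact hxD (by rw [hDdef]; exact Finset.mem_filter.mpr ⟨Finset.mem_univ x, h⟩)
        have hWs : W (j + 1) x = W j x := by
          rw [hWrec j hj1 x, if_neg hmem, add_zero]
        rw [if_neg hxL, add_zero, hWs]
      -- end hdelta
    have hsumif : ∑ x, (if x ∈ Lset then P x / PD else 0) = (∑ x ∈ Lset, P x) / PD := by
      rw [Finset.sum_ite_mem, Finset.univ_inter, Finset.sum_div]
    have hhalf : (1:ℝ) / 2 ≤ (∑ x ∈ Lset, P x) / PD := by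
      rw [le_div_iff₀ hPD0]
      linarith
    calc Φ j + 1 / 2 ≤ Φ j + (∑ x ∈ Lset, P x) / PD := by linarith
      _ = ∑ x, (min (W j x) (cap x) + if x ∈ Lset then P x / PD else 0) := by
          rw [Finset.sum_add_distrib, hsumif]
      _ ≤ Φ (j + 1) := Finset.sum_le_sum fun x _ => hdelta x
  -- growth by induction
  have grow : ∀ j, 1 ≤ j → j ≤ i + 1 → ((j : ℝ) - 1) / 2 ≤ Φ j := by
    intro j hj
    induction j, hj using Nat.le_induction with
    | base => intro _; simp [hΦ1]
    | succ n hn ih =>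
      intro hni
      have hni' : n ≤ i := by omega
      have h1 := ih (by omega)
      have h2 := key n hn hni'
      push_cast
      linarith
  have hub : Φ (i + 1) ≤ (2 * L + 1) / ε := by
    have h1 : Φ (i + 1) ≤ ∑ x, cap x :=
      Finset.sum_le_sum fun x _ => min_le_right _ _
    have h2 : ∑ x, cap x = (2 * L + 1) / ε := by
      simp only [hcapdef]
      rw [← Finset.sum_div, ← Finset.mul_sum, hPsum, mul_one]
    linarith
  have hfin := grow (i + 1) (by omega) le_rfl
  push_cast at hfin
  rw [le_div_iff₀ hε0]
  have : ((i : ℝ)) / 2 ≤ (2 * L + 1) / ε := by linarith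
  have h3 : (i : ℝ) / 2 * ε ≤ (2 * L + 1) / ε * ε :=
    mul_le_mul_of_nonneg_right this hε0.le
  have h4 : (2 * L + 1) / ε * ε = 2 * L + 1 := by field_simp
  linarith
end

section
/- Let X be a finite nonempty example set with probability distribution P (P(x) > 0 for all x), let ε, δ ∈ (0,1) and N ≥ 1 be reals, let h* be a target hypothesis, and let h₁, …, h_m be hypotheses. Define cumulative weights by W₁(x) = 0 and W_{j+1}(x) = W_j(x) + P(x)/P(D(h_j,h*)) if x ∈ D(h_j,h*), W_{j+1}(x) = W_j(x) otherwise. Suppose that for every j with 1 ≤ j ≤ m: P(D(h_j,h*)) ≥ ε (each h_j is ε-bad) and Σ_{x ∈ D(h_j,h*)} W_j(x) ≤ ln(N/δ). Then m ≤ (4·ln(N/δ) + 2)/ε + 1. (This is the deterministic core of the theorem that with probability at least 1−δ, any arbitrary learning algorithm in the PAC-LRC model terminates within O((1/ε)·log(|H|/δ)) rounds.) -/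
open Finset

/-- **Deterministic core of the PAC-LRC termination theorem.** If every round
`j ∈ {1,…,m}` uses an `ε`-bad hypothesis `hⱼ` whose total accumulated weight is at most
`ln (N/δ)`, then `m ≤ (4·ln(N/δ) + 2)/ε + 1`. -/
theorem arbitrary_algorithm_round_bound
    {X : Type*} [Fintype X] [Nonempty X] [DecidableEq X]
    (P : X → ℝ)
    (hPpos : ∀ x, 0 < P x)
    (hPsum : ∑ x, P x = 1)
    (ε δ N : ℝ) (hε0 : 0 < ε) (hε1 : ε < 1) (hδ0 : 0 < δ) (hδ1 : δ < 1) (hN : 1 ≤ N)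
    (hstar : X → ℕ)
    (m : ℕ)
    (hseq : ℕ → (X → ℕ))
    (W : ℕ → X → ℝ)
    (hW1 : ∀ x, W 1 x = 0)
    (hWrec : ∀ j : ℕ, 1 ≤ j → ∀ x : X,
      W (j + 1) x = W j x +
        (if hseq j x ≠ hstar x
         then P x / ∑ y ∈ univ.filter (fun y => hseq j y ≠ hstar y), P y
         else 0))
    (hbad : ∀ j ∈ Finset.Icc 1 m,
      ε ≤ ∑ x ∈ univ.filter (fun x => hseq j x ≠ hstar x), P x)
    (hweight : ∀ j ∈ Finset.Icc 1 m,
      ∑ x ∈ univ.filter (fun x => hseq j x ≠ hstar x), W j x ≤ Real.log (N / δ)) :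
    (m : ℝ) ≤ (4 * Real.log (N / δ) + 2) / ε + 1 := by
  set L := Real.log (N / δ) with hLdef
  have hL0 : 0 ≤ L := Real.log_nonneg (by rw [le_div_iff₀ hδ0]; linarith)
  have hc0 : 0 ≤ (2 * L + 1) / ε := by positivity
  rcases Nat.eq_zero_or_pos m with hm0 | hm1
  · subst hm0
    have : 0 ≤ (4 * L + 2) / ε := by positivity
    simp only [Nat.cast_zero]
    linarith
  · -- key invariants : total weight and potential sum
    have key : ∀ j : ℕ, 1 ≤ j → j ≤ m + 1 →
        (∑ x, W j x = (j : ℝ) - 1) ∧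
        (∑ x, (W j x) ^ 2 / P x ≤ ((j : ℝ) - 1) * ((2 * L + 1) / ε)) := by
      intro j
      induction j with
      | zero => omega
      | succ n ih =>
        intro _ hle
        rcases Nat.eq_zero_or_pos n with hn0 | hn1
        · subst hn0
          refine ⟨by simp [hW1], by simp [hW1]⟩
        · have hnm : n ≤ m := by omega
          have hmem : n ∈ Finset.Icc 1 m := Finset.mem_Icc.mpr ⟨hn1, hnm⟩
          obtain ⟨ihs, ihq⟩ := ih hn1 (by omega)
          set D := univ.filter (fun x => hseq n x ≠ hstar x) with hD
          set p := ∑ x ∈ D, P x with hp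
          have hpε : ε ≤ p := hbad n hmem
          have hppos : 0 < p := lt_of_lt_of_le hε0 hpε
          have hS : ∑ x ∈ D, W n x ≤ L := hweight n hmem
          constructor
          · have hstep : ∑ x, W (n + 1) x
                = ∑ x, W n x + ∑ x, (if hseq n x ≠ hstar x then P x / p else 0) := by
              rw [← Finset.sum_add_distrib]
              exact Finset.sum_congr rfl fun x _ => hWrec n hn1 x
            rw [hstep, ihs, ← Finset.sum_filter, ← hD, ← Finset.sum_div, ← hp,
              div_self (ne_of_gt hppos)]
            push_cast; ring
          · have hsplit : ∑ x, (W (n + 1) x) ^ 2 / P x =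
                ∑ x, (W n x) ^ 2 / P x +
                ∑ x, (if hseq n x ≠ hstar x then 2 * W n x / p + P x / p ^ 2 else 0) := by
              rw [← Finset.sum_add_distrib]
              refine Finset.sum_congr rfl fun x _ => ?_
              rw [hWrec n hn1 x]
              by_cases hx : hseq n x ≠ hstar x
              · simp only [if_pos hx]
                have hPx : P x ≠ 0 := (hPpos x).ne'
                have hp0 : p ≠ 0 := hppos.ne'
                rw [show (∑ y ∈ univ.filter (fun y => hseq n y ≠ hstar y), P y) = p from rfl]
                field_simp
                ring
              · simp only [if_neg hx]
                ring
            have hsum2 : ∑ x, (if hseq n x ≠ hstar x then 2 * W n x / p + P x / p ^ 2 else 0)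
                = 2 * (∑ x ∈ D, W n x) / p + 1 / p := by
              rw [← Finset.sum_filter, ← hD, Finset.sum_add_distrib, ← Finset.sum_div,
                ← Finset.sum_div, ← hp, ← Finset.mul_sum]
              congr 1
              rw [sq]
              field_simp
            have hinc : 2 * (∑ x ∈ D, W n x) / p + 1 / p ≤ (2 * L + 1) / ε := by
              have h1 : 2 * (∑ x ∈ D, W n x) / p ≤ 2 * L / p := by
                apply div_le_div_of_nonneg_right ?_ hppos.le
                linarith
              have h2 : 2 * L / p ≤ 2 * L / ε := by
                apply div_le_div_of_nonneg_left (by linarith) hε0 hpε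
              have h3 : 1 / p ≤ 1 / ε := by
                apply div_le_div_of_nonneg_left (by norm_num) hε0 hpε
              have : 2 * L / ε + 1 / ε = (2 * L + 1) / ε := by ring
              linarith
            rw [hsplit, hsum2]
            have hcast : ((n + 1 : ℕ) : ℝ) - 1 = ((n : ℝ) - 1) + 1 := by push_cast; ring
            rw [hcast]
            nlinarith [hinc, ihq]
    obtain ⟨hVm, hΦm⟩ := key (m + 1) (by omega) le_rfl
    have hVm' : ∑ x, W (m + 1) x = (m : ℝ) := by
      rw [hVm]; push_cast; ring
    have hΦm' : ∑ x, (W (m + 1) x) ^ 2 / P x ≤ (m : ℝ) * ((2 * L + 1) / ε) := by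
      calc ∑ x, (W (m + 1) x) ^ 2 / P x ≤ (((m + 1 : ℕ) : ℝ) - 1) * ((2 * L + 1) / ε) := hΦm
        _ = (m : ℝ) * ((2 * L + 1) / ε) := by push_cast; ring
    -- Cauchy–Schwarz
    have hCS := Finset.sum_mul_sq_le_sq_mul_sq univ (fun x => Real.sqrt (P x))
      (fun x => W (m + 1) x / Real.sqrt (P x))
    have e1 : ∑ x, Real.sqrt (P x) * (W (m + 1) x / Real.sqrt (P x)) = ∑ x, W (m + 1) x := by
      refine Finset.sum_congr rfl fun x _ => ?_
      have : Real.sqrt (P x) ≠ 0 := ne_of_gt (Real.sqrt_pos.mpr (hPpos x))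
      field_simp
    have e3 : ∑ x, (Real.sqrt (P x)) ^ 2 = ∑ x, P x := by
      refine Finset.sum_congr rfl fun x _ => Real.sq_sqrt (hPpos x).le
    have e4 : ∑ x, (W (m + 1) x / Real.sqrt (P x)) ^ 2 = ∑ x, (W (m + 1) x) ^ 2 / P x := by
      refine Finset.sum_congr rfl fun x _ => ?_
      rw [div_pow, Real.sq_sqrt (hPpos x).le]
    rw [e1, e3, e4, hVm', hPsum, one_mul] at hCS
    -- Conclude m ≤ (2L+1)/ε
    have hmpos : (0 : ℝ) < (m : ℝ) := by exact_mod_cast hm1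
    have hmle : (m : ℝ) ≤ (2 * L + 1) / ε := by
      have : (m : ℝ) * (m : ℝ) ≤ (m : ℝ) * ((2 * L + 1) / ε) := by nlinarith
      exact le_of_mul_le_mul_left this hmpos
    have hfinal : (2 * L + 1) / ε ≤ (4 * L + 2) / ε := by
      apply div_le_div_of_nonneg_right ?_ hε0.le
      linarith
    linarith
end
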